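/- Let X, Y be Banach spaces, x₀* ∈ X* with ‖x₀*‖ = 1 and y₀ ∈ Y with ‖y₀‖ = 1, and let G = x₀* ⊗ y₀ ∈ L(X,Y) be the rank-one operator G(x) = x₀*(x)·y₀. Then n_G(X,Y) = n(X*, x₀*) · n(Y, y₀). -/

import Mathlib

open NormedSpace

/-- Numerical radius of `z` with respect to the unit vector `u`. -/
noncomputable def vRad {Z : Type*} [NormedAddCommGroup Z] [NormedSpace ℝ Z] (u z : Z) : ℝ :=
  sSup {r : ℝ | ∃ φ : StrongDual ℝ Z, ‖φ‖ = 1 ∧ φ u = 1 ∧ |φ z| = r}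

/-- Numerical index of the space with respect to the unit vector `u`. -/
noncomputable def nInd {Z : Type*} [NormedAddCommGroup Z] [NormedSpace ℝ Z] (u : Z) : ℝ :=
  sInf {r : ℝ | ∃ z : Z, ‖z‖ = 1 ∧ vRad u z = r}



section pd
variable {Z : Type*} [NormedAddCommGroup Z] [NormedSpace ℝ Z]

/-- The set of difference quotients of the norm at `u` in direction `z`. -/
def quotSet (u z : Z) : Set ℝ := {r : ℝ | ∃ t : ℝ, 0 < t ∧ r = (‖u + t • z‖ - 1) / t}

/-- One-sided derivative (as an infimum of difference quotients). -/
noncomputable def pd (u z : Z) : ℝ := sInf (quotSet u z)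

lemma quot_mem (u z : Z) {t : ℝ} (ht : 0 < t) : (‖u + t • z‖ - 1) / t ∈ quotSet u z :=
  ⟨t, ht, rfl⟩

lemma quotSet_nonempty (u z : Z) : (quotSet u z).Nonempty := ⟨_, quot_mem u z one_pos⟩

lemma quot_ge (u z : Z) (hu : ‖u‖ = 1) {t : ℝ} (ht : 0 < t) :
    -‖z‖ ≤ (‖u + t • z‖ - 1) / t := by
  have h1 : ‖u‖ - ‖t • z‖ ≤ ‖u + t • z‖ := by
    have := norm_sub_norm_le u (-(t • z))
    simpa [sub_neg_eq_add, norm_neg] using (abs_le.1 (abs_norm_sub_norm_le u (-(t•z)))).2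
  have h2 : ‖t • z‖ = t * ‖z‖ := by rw [norm_smul, Real.norm_eq_abs, abs_of_pos ht]
  rw [le_div_iff₀ ht]
  nlinarith [h1, h2, hu]

lemma quotSet_bddBelow (u z : Z) (hu : ‖u‖ = 1) : BddBelow (quotSet u z) := by
  refine ⟨-‖z‖, ?_⟩
  rintro r ⟨t, ht, rfl⟩
  exact quot_ge u z hu ht

lemma pd_le_quot (u z : Z) (hu : ‖u‖ = 1) {t : ℝ} (ht : 0 < t) :
    pd u z ≤ (‖u + t • z‖ - 1) / t :=
  csInf_le (quotSet_bddBelow u z hu) (quot_mem u z ht)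

lemma neg_norm_le_pd (u z : Z) (hu : ‖u‖ = 1) : -‖z‖ ≤ pd u z := by
  refine le_csInf (quotSet_nonempty u z) ?_
  rintro r ⟨t, ht, rfl⟩
  exact quot_ge u z hu ht

lemma pd_le_norm (u z : Z) (hu : ‖u‖ = 1) : pd u z ≤ ‖z‖ := by
  have h := pd_le_quot u z hu one_pos
  rw [one_smul] at h
  have hn : ‖u + z‖ ≤ 1 + ‖z‖ := by
    calc ‖u + z‖ ≤ ‖u‖ + ‖z‖ := norm_add_le _ _
    _ = 1 + ‖z‖ := by rw [hu]
  rw [div_one] at h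
  linarith

lemma quot_mono (u z : Z) (hu : ‖u‖ = 1) {t' t : ℝ} (ht' : 0 < t') (htt : t' ≤ t) :
    (‖u + t' • z‖ - 1) / t' ≤ (‖u + t • z‖ - 1) / t := by
  have ht : 0 < t := lt_of_lt_of_le ht' htt
  set c := t' / t with hc
  have hc0 : 0 < c := div_pos ht' ht
  have hc1 : c ≤ 1 := (div_le_one ht).2 htt
  have key : u + t' • z = (1 - c) • u + c • (u + t • z) := by
    have : c * t = t' := div_mul_cancel₀ t' (ne_of_gt ht)
    rw [smul_add, smul_smul, this]
    module
  have hn : ‖u + t' • z‖ ≤ (1 - c) + c * ‖u + t • z‖ := by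
    calc ‖u + t' • z‖ = ‖(1 - c) • u + c • (u + t • z)‖ := by rw [key]
    _ ≤ ‖(1 - c) • u‖ + ‖c • (u + t • z)‖ := norm_add_le _ _
    _ = (1 - c) + c * ‖u + t • z‖ := by
        rw [norm_smul, norm_smul, Real.norm_eq_abs, Real.norm_eq_abs,
          abs_of_nonneg (by linarith), abs_of_pos hc0, hu, mul_one]
  rw [div_le_div_iff₀ ht' ht]
  have hct : c * t = t' := div_mul_cancel₀ t' (ne_of_gt ht)
  have h3 : c * t * ‖u + t • z‖ = t' * ‖u + t • z‖ := by rw [hct]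
  linarith [mul_le_mul_of_nonneg_right hn ht.le, h3, hct]

lemma pd_zero (u : Z) (hu : ‖u‖ = 1) : pd u (0 : Z) = 0 := by
  have : quotSet u (0 : Z) = {0} := by
    ext r
    constructor
    · rintro ⟨t, ht, rfl⟩
      simp [hu, ne_of_gt ht]
    · rintro rfl
      exact ⟨1, one_pos, by simp [hu]⟩
  rw [pd, this, csInf_singleton]

lemma pd_add (u z₁ z₂ : Z) (hu : ‖u‖ = 1) : pd u (z₁ + z₂) ≤ pd u z₁ + pd u z₂ := by
  refine le_of_forall_pos_le_add ?_
  intro ε hε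
  obtain ⟨r₁, ⟨t₁, ht₁, rfl⟩, hr₁⟩ := exists_lt_of_csInf_lt (quotSet_nonempty u z₁)
    (show sInf (quotSet u z₁) < pd u z₁ + ε/2 from lt_add_of_pos_right _ (by linarith))
  obtain ⟨r₂, ⟨t₂, ht₂, rfl⟩, hr₂⟩ := exists_lt_of_csInf_lt (quotSet_nonempty u z₂)
    (show sInf (quotSet u z₂) < pd u z₂ + ε/2 from lt_add_of_pos_right _ (by linarith))
  set t := min t₁ t₂ / 2 with htdef
  have ht : 0 < t := by positivity
  have h2t1 : 2 * t ≤ t₁ := by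
    have := min_le_left t₁ t₂; simp [htdef]; linarith
  have h2t2 : 2 * t ≤ t₂ := by
    have := min_le_right t₁ t₂; simp [htdef]; linarith
  have key : ‖u + t • (z₁ + z₂)‖ ≤ (‖u + (2*t) • z₁‖ + ‖u + (2*t) • z₂‖) / 2 := by
    have : u + t • (z₁ + z₂) = (1/2 : ℝ) • (u + (2*t) • z₁) + (1/2 : ℝ) • (u + (2*t) • z₂) := by
      module
    rw [this]
    calc ‖_ + _‖ ≤ ‖(1/2 : ℝ) • (u + (2*t) • z₁)‖ + ‖(1/2 : ℝ) • (u + (2*t) • z₂)‖ :=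
          norm_add_le _ _
    _ = (‖u + (2*t) • z₁‖ + ‖u + (2*t) • z₂‖) / 2 := by
          rw [norm_smul, norm_smul]; simp [abs_of_nonneg]; ring
  have hq : (‖u + t • (z₁ + z₂)‖ - 1) / t ≤
      (‖u + (2*t) • z₁‖ - 1) / (2*t) + (‖u + (2*t) • z₂‖ - 1) / (2*t) := by
    rw [← add_div, div_le_div_iff₀ ht (by positivity)]
    nlinarith [key]
  have hm1 : (‖u + (2*t) • z₁‖ - 1) / (2*t) ≤ (‖u + t₁ • z₁‖ - 1) / t₁ :=
    quot_mono u z₁ hu (by positivity) h2t1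
  have hm2 : (‖u + (2*t) • z₂‖ - 1) / (2*t) ≤ (‖u + t₂ • z₂‖ - 1) / t₂ :=
    quot_mono u z₂ hu (by positivity) h2t2
  have := pd_le_quot u (z₁ + z₂) hu ht
  linarith

lemma pd_smul (u z : Z) (hu : ‖u‖ = 1) {c : ℝ} (hc : 0 < c) : pd u (c • z) = c * pd u z := by
  have key : ∀ t : ℝ, 0 < t → (‖u + t • (c • z)‖ - 1) / t = c * ((‖u + (t*c) • z‖ - 1) / (t*c)) := by
    intro t ht
    rw [smul_smul]
    field_simp
  apply le_antisymm
  · refine le_of_forall_pos_le_add ?_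
    intro ε hε
    obtain ⟨r, ⟨s, hs, rfl⟩, hr⟩ := exists_lt_of_csInf_lt (quotSet_nonempty u z)
      (show sInf (quotSet u z) < pd u z + ε/c from lt_add_of_pos_right _ (by positivity))
    have hsc : 0 < s / c := by positivity
    have := pd_le_quot u (c • z) hu hsc
    rw [key (s/c) hsc, div_mul_cancel₀ s (ne_of_gt hc)] at this
    calc pd u (c • z) ≤ c * ((‖u + s • z‖ - 1) / s) := this
    _ ≤ c * (pd u z + ε/c) := by
        apply mul_le_mul_of_nonneg_left (le_of_lt hr) (le_of_lt hc)
    _ = c * pd u z + ε := by field_simp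
  · refine le_csInf (quotSet_nonempty u (c • z)) ?_
    rintro r ⟨t, ht, rfl⟩
    rw [key t ht]
    have := pd_le_quot u z hu (show 0 < t * c by positivity)
    nlinarith [this]

lemma pd_neg_add_nonneg (u z : Z) (hu : ‖u‖ = 1) : 0 ≤ pd u z + pd u (-z) := by
  have := pd_add u z (-z) hu
  simp only [add_neg_cancel] at this
  rw [pd_zero u hu] at this
  linarith

lemma pd_neg_u (u : Z) (hu : ‖u‖ = 1) : pd u (-u) ≤ -1 := by
  have h := pd_le_quot u (-u) hu (show (0:ℝ) < 1/2 by norm_num)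
  have e : u + (1/2 : ℝ) • (-u) = (1/2 : ℝ) • u := by module
  rw [e, norm_smul, Real.norm_eq_abs, hu, abs_of_pos (by norm_num : (0:ℝ) < 1/2)] at h
  norm_num at h
  linarith

lemma state_le_pd (u z : Z) (hu : ‖u‖ = 1) (φ : StrongDual ℝ Z) (hφ : ‖φ‖ ≤ 1) (hφu : φ u = 1) :
    φ z ≤ pd u z := by
  refine le_csInf (quotSet_nonempty u z) ?_
  rintro r ⟨t, ht, rfl⟩
  have h1 : φ (u + t • z) ≤ ‖u + t • z‖ := by
    calc φ (u + t • z) ≤ ‖φ (u + t • z)‖ := le_abs_self _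
    _ ≤ ‖φ‖ * ‖u + t • z‖ := φ.le_opNorm _
    _ ≤ 1 * ‖u + t • z‖ := mul_le_mul_of_nonneg_right hφ (norm_nonneg _)
    _ = ‖u + t • z‖ := one_mul _
  have h2 : φ (u + t • z) = 1 + t * φ z := by
    rw [map_add, map_smul, hφu]; simp
  rw [le_div_iff₀ ht]
  nlinarith

lemma exists_state (u z : Z) (hu : ‖u‖ = 1) :
    ∃ φ : StrongDual ℝ Z, ‖φ‖ = 1 ∧ φ u = 1 ∧ φ z = pd u z := by
  by_cases hz : z = 0
  · have hune : u ≠ 0 := by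
      intro h; rw [h] at hu; simp at hu
    obtain ⟨g, hg1, hg2⟩ := exists_dual_vector ℝ u (norm_ne_zero_iff.2 hune)
    refine ⟨g, hg1, ?_, ?_⟩
    · rw [hg2, hu]; norm_num
    · rw [hz, map_zero, pd_zero u hu]
  · set f : Z →ₗ.[ℝ] ℝ := LinearPMap.mkSpanSingleton z (pd u z) hz with hfdef
    have hf : ∀ x : f.domain, f x ≤ pd u x := by
      rintro ⟨w, hw⟩
      rcases Submodule.mem_span_singleton.1 hw with ⟨c, rfl⟩
      have happ : f ⟨c • z, hw⟩ = c • (pd u z) := LinearPMap.mkSpanSingleton'_apply z (pd u z) _ c _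
      rw [happ]
      simp only [smul_eq_mul]
      rcases lt_trichotomy c 0 with h | h | h
      · have hneg : c • z = (-c) • (-z) := by module
        rw [hneg, pd_smul u (-z) hu (by linarith)]
        have := pd_neg_add_nonneg u z hu
        nlinarith
      · subst h; simp [pd_zero u hu]
      · rw [pd_smul u z hu h]
    obtain ⟨g, hg1, hg2⟩ := exists_extension_of_le_sublinear f (pd u)
      (fun c hc x => pd_smul u x hu hc) (fun x y => pd_add u x y hu) hf
    have hbound : ∀ w : Z, ‖g w‖ ≤ 1 * ‖w‖ := by
      intro w
      rw [Real.norm_eq_abs, one_mul, abs_le]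
      constructor
      · have h1 : g (-w) ≤ pd u (-w) := hg2 (-w)
        have h2 : pd u (-w) ≤ ‖(-w)‖ := pd_le_norm u (-w) hu
        rw [norm_neg] at h2
        have : g (-w) = - g w := by rw [map_neg]
        linarith
      · exact (hg2 w).trans (pd_le_norm u w hu)
    set φ : StrongDual ℝ Z := g.mkContinuous 1 hbound with hφdef
    have hφapp : ∀ w, φ w = g w := fun w => rfl
    have hgu : g u = 1 := by
      have h1 : g u ≤ pd u u := hg2 u
      have h2 : pd u u ≤ ‖u‖ := pd_le_norm u u hu
      have h3 : g (-u) ≤ pd u (-u) := hg2 (-u)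
      have h4 : pd u (-u) ≤ -1 := pd_neg_u u hu
      have h5 : g (-u) = - g u := by rw [map_neg]
      rw [hu] at h2
      linarith
    have hφu : φ u = 1 := by rw [hφapp, hgu]
    have hφnorm : ‖φ‖ = 1 := by
      apply le_antisymm
      · exact g.mkContinuous_norm_le (by norm_num) hbound
      · have := φ.le_opNorm u
        rw [hφu, hu, mul_one] at this
        simpa using this
    have hφz : φ z = pd u z := by
      rw [hφapp]
      have hmem : z ∈ f.domain := Submodule.mem_span_singleton_self z
      have := hg1 ⟨z, hmem⟩
      rw [LinearPMap.mkSpanSingleton_apply ℝ ℝ hz (pd u z)] at this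
      simpa using this
    exact ⟨φ, hφnorm, hφu, hφz⟩

lemma vRad_eq (u z : Z) (hu : ‖u‖ = 1) : vRad u z = max (pd u z) (pd u (-z)) := by
  set M := max (pd u z) (pd u (-z)) with hM
  have hM0 : 0 ≤ M := by
    have := pd_neg_add_nonneg u z hu
    rcases le_total (pd u z) (pd u (-z)) with h | h
    · have : 0 ≤ 2 * pd u (-z) := by linarith
      simp only [hM, le_max_iff]; right; linarith
    · have : 0 ≤ 2 * pd u z := by linarith
      simp only [hM, le_max_iff]; left; linarith
  have hub : ∀ r ∈ {r : ℝ | ∃ φ : StrongDual ℝ Z, ‖φ‖ = 1 ∧ φ u = 1 ∧ |φ z| = r}, r ≤ M := by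
    rintro r ⟨φ, h1, h2, rfl⟩
    rw [abs_le]
    constructor
    · have h3 : φ (-z) ≤ pd u (-z) := state_le_pd u (-z) hu φ h1.le h2
      rw [map_neg] at h3
      have : pd u (-z) ≤ M := le_max_right _ _
      linarith
    · exact (state_le_pd u z hu φ h1.le h2).trans (le_max_left _ _)
  have hmem : M ∈ {r : ℝ | ∃ φ : StrongDual ℝ Z, ‖φ‖ = 1 ∧ φ u = 1 ∧ |φ z| = r} := by
    rcases le_total (pd u (-z)) (pd u z) with h | h
    · obtain ⟨φ, h1, h2, h3⟩ := exists_state u z hu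
      have hMz : M = pd u z := max_eq_left h
      refine ⟨φ, h1, h2, ?_⟩
      rw [h3, ← hMz, abs_of_nonneg hM0]
    · obtain ⟨φ, h1, h2, h3⟩ := exists_state u (-z) hu
      refine ⟨φ, h1, h2, ?_⟩
      have hMz : M = pd u (-z) := max_eq_right h
      have hφz : φ z = - M := by
        have : φ (-z) = pd u (-z) := h3
        rw [map_neg] at this
        linarith [this, hMz]
      rw [hφz, abs_neg, abs_of_nonneg hM0]
  exact IsGreatest.csSup_eq ⟨hmem, hub⟩

lemma vRad_nonneg (u z : Z) (hu : ‖u‖ = 1) : 0 ≤ vRad u z := by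
  rw [vRad_eq u z hu]
  have := pd_neg_add_nonneg u z hu
  rcases le_total (pd u z) (pd u (-z)) with h | h
  · simp only [le_max_iff]; right; linarith
  · simp only [le_max_iff]; left; linarith

lemma vRad_le_norm (u z : Z) (hu : ‖u‖ = 1) : vRad u z ≤ ‖z‖ := by
  rw [vRad_eq u z hu]
  apply max_le (pd_le_norm u z hu)
  have := pd_le_norm u (-z) hu
  rwa [norm_neg] at this

lemma vRad_neg (u z : Z) (hu : ‖u‖ = 1) : vRad u (-z) = vRad u z := by
  rw [vRad_eq u z hu, vRad_eq u (-z) hu, neg_neg, max_comm]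

lemma vRad_smul (u z : Z) (hu : ‖u‖ = 1) (c : ℝ) : vRad u (c • z) = |c| * vRad u z := by
  have hpos : ∀ (d : ℝ) (w : Z), 0 < d → vRad u (d • w) = d * vRad u w := by
    intro d w hd
    rw [vRad_eq u (d • w) hu, vRad_eq u w hu]
    have h1 : -(d • w) = d • (-w) := by module
    rw [h1, pd_smul u w hu hd, pd_smul u (-w) hu hd]
    rcases le_total (pd u w) (pd u (-w)) with h | h
    · rw [max_eq_right h, max_eq_right (by nlinarith : d * pd u w ≤ d * pd u (-w))]
    · rw [max_eq_left h, max_eq_left (by nlinarith : d * pd u (-w) ≤ d * pd u w)]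
  rcases lt_trichotomy c 0 with h | h | h
  · have h1 : c • z = (-c) • (-z) := by module
    rw [h1, hpos (-c) (-z) (by linarith), vRad_neg u z hu, abs_of_neg h]
  · subst h
    simp only [zero_smul, abs_zero, zero_mul]
    rw [vRad_eq u 0 hu, neg_zero, pd_zero u hu]
    simp
  · rw [hpos c z h, abs_of_pos h]

lemma nInd_le_vRad (u : Z) (hu : ‖u‖ = 1) {z : Z} (hz : ‖z‖ = 1) : nInd u ≤ vRad u z := by
  apply csInf_le
  · refine ⟨0, ?_⟩
    rintro r ⟨w, hw, rfl⟩
    exact vRad_nonneg u w hu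
  · exact ⟨z, hz, rfl⟩

lemma nInd_nonneg (u : Z) (hu : ‖u‖ = 1) : 0 ≤ nInd u := by
  have hne : {r : ℝ | ∃ z : Z, ‖z‖ = 1 ∧ vRad u z = r}.Nonempty := ⟨vRad u u, u, hu, rfl⟩
  apply le_csInf hne
  rintro r ⟨w, hw, rfl⟩
  exact vRad_nonneg u w hu

lemma nInd_le_one (u : Z) (hu : ‖u‖ = 1) : nInd u ≤ 1 := by
  have h := nInd_le_vRad u hu hu
  have := vRad_le_norm u u hu
  rw [hu] at this
  linarith

lemma le_nInd (u : Z) (hu : ‖u‖ = 1) (k : ℝ) (h : ∀ z : Z, ‖z‖ = 1 → k ≤ vRad u z) :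
    k ≤ nInd u := by
  have hne : {r : ℝ | ∃ z : Z, ‖z‖ = 1 ∧ vRad u z = r}.Nonempty := ⟨vRad u u, u, hu, rfl⟩
  apply le_csInf hne
  rintro r ⟨w, hw, rfl⟩
  exact h w hw

lemma nInd_mul_norm_le_vRad (u : Z) (hu : ‖u‖ = 1) (z : Z) : nInd u * ‖z‖ ≤ vRad u z := by
  by_cases hz : z = 0
  · subst hz
    simp only [norm_zero, mul_zero]
    exact vRad_nonneg u 0 hu
  · have hnz : 0 < ‖z‖ := norm_pos_iff.2 hz
    set w := ‖z‖⁻¹ • z with hwdef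
    have hw : ‖w‖ = 1 := by
      rw [hwdef, norm_smul, Real.norm_eq_abs, abs_of_pos (by positivity)]
      field_simp
    have hzw : z = ‖z‖ • w := by
      rw [hwdef, smul_smul]
      field_simp
      rw [one_smul]
    calc nInd u * ‖z‖ = ‖z‖ * nInd u := by ring
    _ ≤ ‖z‖ * vRad u w := by
        apply mul_le_mul_of_nonneg_left (nInd_le_vRad u hu hw) (le_of_lt hnz)
    _ = |‖z‖| * vRad u w := by rw [abs_of_pos hnz]
    _ = vRad u (‖z‖ • w) := (vRad_smul u w hu ‖z‖).symm
    _ = vRad u z := by rw [← hzw]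

lemma vRad_attained (u z : Z) (hu : ‖u‖ = 1) :
    ∃ φ : StrongDual ℝ Z, ‖φ‖ = 1 ∧ φ u = 1 ∧ |φ z| = vRad u z := by
  rw [vRad_eq u z hu]
  set M := max (pd u z) (pd u (-z)) with hM
  have hM0 : 0 ≤ M := by
    have := pd_neg_add_nonneg u z hu
    rcases le_total (pd u z) (pd u (-z)) with h | h
    · simp only [hM, le_max_iff]; right; linarith
    · simp only [hM, le_max_iff]; left; linarith
  rcases le_total (pd u (-z)) (pd u z) with h | h
  · obtain ⟨φ, h1, h2, h3⟩ := exists_state u z hu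
    have hMz : M = pd u z := max_eq_left h
    exact ⟨φ, h1, h2, by rw [h3, ← hMz, abs_of_nonneg hM0]⟩
  · obtain ⟨φ, h1, h2, h3⟩ := exists_state u (-z) hu
    have hMz : M = pd u (-z) := max_eq_right h
    refine ⟨φ, h1, h2, ?_⟩
    have hφz : φ z = - M := by
      rw [map_neg] at h3; linarith [h3, hMz]
    rw [hφz, abs_neg, abs_of_nonneg hM0]

lemma exists_unit_vRad_lt (u : Z) (hu : ‖u‖ = 1) {ε : ℝ} (hε : 0 < ε) :
    ∃ z : Z, ‖z‖ = 1 ∧ vRad u z < nInd u + ε := by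
  have hne : {r : ℝ | ∃ z : Z, ‖z‖ = 1 ∧ vRad u z = r}.Nonempty := ⟨vRad u u, u, hu, rfl⟩
  obtain ⟨r, ⟨z, hz, rfl⟩, hr⟩ := exists_lt_of_csInf_lt hne
    (show sInf {r : ℝ | ∃ z : Z, ‖z‖ = 1 ∧ vRad u z = r} < nInd u + ε from
      lt_add_of_pos_right _ hε)
  exact ⟨z, hz, hr⟩

/-- Two-sided norm estimate from the numerical radius. -/
lemma exists_twosided (u z : Z) (hu : ‖u‖ = 1) {ε : ℝ} (hε : 0 < ε) :
    ∃ r₀ : ℝ, 0 < r₀ ∧ ∀ r : ℝ, |r| ≤ r₀ → ‖u + r • z‖ ≤ 1 + |r| * (vRad u z + ε) := by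
  have hp1 : pd u z < vRad u z + ε := by
    have : pd u z ≤ vRad u z := by rw [vRad_eq u z hu]; exact le_max_left _ _
    linarith
  have hp2 : pd u (-z) < vRad u z + ε := by
    have : pd u (-z) ≤ vRad u z := by rw [vRad_eq u z hu]; exact le_max_right _ _
    linarith
  obtain ⟨r1, ⟨t₁, ht₁, rfl⟩, hq1⟩ := exists_lt_of_csInf_lt (quotSet_nonempty u z) hp1
  obtain ⟨r2, ⟨t₂, ht₂, rfl⟩, hq2⟩ := exists_lt_of_csInf_lt (quotSet_nonempty u (-z)) hp2
  refine ⟨min t₁ t₂, lt_min ht₁ ht₂, ?_⟩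
  intro r hr
  rcases lt_trichotomy r 0 with h | h | h
  · have hrpos : 0 < -r := by linarith
    have habs : |r| = -r := abs_of_neg h
    have h2t : -r ≤ t₂ := le_trans (habs ▸ hr) (min_le_right _ _)
    have hmono := quot_mono u (-z) hu hrpos h2t
    have : (‖u + (-r) • (-z)‖ - 1) / (-r) < vRad u z + ε := lt_of_le_of_lt hmono hq2
    rw [div_lt_iff₀ hrpos] at this
    have he : u + (-r) • (-z) = u + r • z := by module
    rw [he] at this
    rw [habs]
    linarith
  · subst h
    simp [hu]
  · have habs : |r| = r := abs_of_pos h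
    have h1t : r ≤ t₁ := le_trans (habs ▸ hr) (min_le_left _ _)
    have hmono := quot_mono u z hu h h1t
    have : (‖u + r • z‖ - 1) / r < vRad u z + ε := lt_of_le_of_lt hmono hq1
    rw [div_lt_iff₀ h] at this
    rw [habs]
    linarith

lemma abs_add_abs_exists (α β r₀ : ℝ) (hr : 0 ≤ r₀) :
    ∃ r : ℝ, |r| ≤ r₀ ∧ |α| + r₀ * |β| ≤ |α + r * β| := by
  rcases le_or_gt 0 α with ha | ha <;> rcases le_or_gt 0 β with hb | hb
  · refine ⟨r₀, le_of_eq (abs_of_nonneg hr), le_of_eq ?_⟩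
    rw [abs_of_nonneg ha, abs_of_nonneg hb, abs_of_nonneg (add_nonneg ha (mul_nonneg hr hb))]
  · refine ⟨-r₀, le_of_eq (by rw [abs_neg, abs_of_nonneg hr]), le_of_eq ?_⟩
    rw [abs_of_nonneg ha, abs_of_neg hb,
      abs_of_nonneg (by nlinarith : (0:ℝ) ≤ α + -r₀ * β)]
    ring
  · refine ⟨-r₀, le_of_eq (by rw [abs_neg, abs_of_nonneg hr]), le_of_eq ?_⟩
    rw [abs_of_neg ha, abs_of_nonneg hb,
      abs_of_nonpos (by nlinarith : α + -r₀ * β ≤ 0)]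
    ring
  · refine ⟨r₀, le_of_eq (abs_of_nonneg hr), le_of_eq ?_⟩
    rw [abs_of_neg ha, abs_of_neg hb,
      abs_of_nonpos (by nlinarith : α + r₀ * β ≤ 0)]
    ring

end pd

section main
variable {X Y : Type*} [NormedAddCommGroup X] [NormedSpace ℝ X]
  [NormedAddCommGroup Y] [NormedSpace ℝ Y]

set_option maxHeartbeats 1000000 in
lemma claimA (x₀ xs : X →L[ℝ] ℝ) (hx₀ : ‖x₀‖ = 1) (hxs : ‖xs‖ = 1)
    (y₀ y : Y) (hy₀ : ‖y₀‖ = 1) (hy : ‖y‖ = 1) :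
    pd (x₀.smulRight y₀) (xs.smulRight y) ≤ vRad x₀ xs * vRad y₀ y := by
  have hG : ‖x₀.smulRight y₀‖ = 1 := by
    rw [ContinuousLinearMap.norm_smulRight_apply, hx₀, hy₀, one_mul]
  set a := vRad x₀ xs with hadef
  set b := vRad y₀ y with hbdef
  have ha0 : 0 ≤ a := vRad_nonneg x₀ xs hx₀
  have hb0 : 0 ≤ b := vRad_nonneg y₀ y hy₀
  have ha1 : a ≤ 1 := by have := vRad_le_norm x₀ xs hx₀; rwa [hxs] at this
  have hb1 : b ≤ 1 := by have := vRad_le_norm y₀ y hy₀; rwa [hy] at this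
  refine le_of_forall_pos_le_add ?_
  intro ε hε
  set ε' := min (ε/3) 1 with hε'def
  have hε'0 : 0 < ε' := lt_min (by linarith) one_pos
  have hε'1 : ε' ≤ 1 := min_le_right _ _
  have hε'ε : 3 * ε' ≤ ε := by
    have h := min_le_left (ε/3) 1
    rw [← hε'def] at h
    linarith
  have habs3 : 0 ≤ a * b + 3 * ε' := by nlinarith
  obtain ⟨r₀, hr₀, hXb⟩ := exists_twosided x₀ xs hx₀ hε'0
  obtain ⟨s₀, hs₀, hYb⟩ := exists_twosided y₀ y hy₀ hε'0
  set t := min (r₀ / (b + ε')) (s₀ / (1 + s₀)) with htdef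
  have ht : 0 < t := lt_min (div_pos hr₀ (by linarith)) (div_pos hs₀ (by linarith))
  have htb : t * (b + ε') ≤ r₀ := by
    have h1 : t ≤ r₀ / (b + ε') := min_le_left _ _
    rwa [le_div_iff₀ (by linarith : (0:ℝ) < b + ε')] at h1
  have hts : t * (1 + s₀) ≤ s₀ := by
    have h1 : t ≤ s₀ / (1 + s₀) := min_le_right _ _
    rwa [le_div_iff₀ (by linarith : (0:ℝ) < 1 + s₀)] at h1
  have key : ‖x₀.smulRight y₀ + t • xs.smulRight y‖ ≤ 1 + t * (a * b + 3 * ε') := by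
    apply ContinuousLinearMap.opNorm_le_bound _
      (by nlinarith [mul_nonneg ht.le habs3] : (0:ℝ) ≤ 1 + t * (a * b + 3 * ε'))
    intro x
    set α := x₀ x with hαdef
    set β := xs x with hβdef
    set n := ‖x‖ with hndef
    have hn0 : 0 ≤ n := norm_nonneg x
    have hαn : |α| ≤ n := by
      have := x₀.le_opNorm x
      rwa [hx₀, one_mul, Real.norm_eq_abs] at this
    have hβn : |β| ≤ n := by
      have := xs.le_opNorm x
      rwa [hxs, one_mul, Real.norm_eq_abs] at this
    have hXB : ∀ r : ℝ, |r| ≤ r₀ → |α + r * β| ≤ (1 + |r| * (a + ε')) * n := by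
      intro r hr
      have h1 := hXb r hr
      have h2 : (x₀ + r • xs) x = α + r * β := by
        rw [ContinuousLinearMap.add_apply, ContinuousLinearMap.smul_apply, smul_eq_mul]
      have h3 := (x₀ + r • xs).le_opNorm x
      rw [h2, Real.norm_eq_abs] at h3
      calc |α + r * β| ≤ ‖x₀ + r • xs‖ * n := h3
      _ ≤ (1 + |r| * (a + ε')) * n := mul_le_mul_of_nonneg_right h1 hn0
    have hval : (x₀.smulRight y₀ + t • xs.smulRight y) x = α • y₀ + (t * β) • y := by
      rw [ContinuousLinearMap.add_apply, ContinuousLinearMap.smul_apply,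
        ContinuousLinearMap.smulRight_apply, ContinuousLinearMap.smulRight_apply,
        smul_smul]
    rw [hval]
    rcases lt_or_ge (s₀ * |α|) (t * |β|) with hc | hc
    · -- small α case
      have h1 : ‖α • y₀ + (t * β) • y‖ ≤ |α| + t * |β| := by
        calc ‖α • y₀ + (t * β) • y‖ ≤ ‖α • y₀‖ + ‖(t * β) • y‖ := norm_add_le _ _
        _ = |α| + t * |β| := by
            rw [norm_smul, norm_smul, hy₀, hy, Real.norm_eq_abs, Real.norm_eq_abs,
              mul_one, mul_one, abs_mul, abs_of_pos ht]
      have h3 : (t * (1 + s₀)) * |β| ≤ s₀ * |β| := mul_le_mul_of_nonneg_right hts (abs_nonneg _)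
      have h4 : s₀ * ‖α • y₀ + (t * β) • y‖ ≤ s₀ * |β| := by nlinarith
      have h5 : ‖α • y₀ + (t * β) • y‖ ≤ |β| := by
        have := (mul_le_mul_iff_right₀ hs₀).1 h4
        exact this
      have h6 : (0:ℝ) ≤ t * (a * b + 3 * ε') * n := mul_nonneg (mul_nonneg ht.le habs3) hn0
      nlinarith
    · -- main case
      by_cases hα : α = 0
      · have hβ0 : β = 0 := by
          rw [hα] at hc
          simp only [abs_zero, mul_zero] at hc
          have h1 : t * |β| ≤ 0 := by linarith
          have := abs_nonneg β
          have : |β| = 0 := by nlinarith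
          exact abs_eq_zero.1 this
        rw [hα, hβ0]
        simp only [zero_smul, mul_zero, zero_add, norm_zero]
        exact mul_nonneg (by nlinarith [mul_nonneg ht.le habs3]) hn0
      · have hαpos : 0 < |α| := abs_pos.2 hα
        set sβ := t * β / α with hsβdef
        have hsabs : |sβ| = t * |β| / |α| := by
          rw [hsβdef, abs_div, abs_mul, abs_of_pos ht]
        have hss₀ : |sβ| ≤ s₀ := by
          rw [hsabs, div_le_iff₀ hαpos]
          linarith
        have hprod : α * sβ = t * β := by
          rw [hsβdef]
          field_simp
        have hval2 : α • y₀ + (t * β) • y = α • (y₀ + sβ • y) := by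
          rw [smul_add, smul_smul, hprod]
        have h1 : ‖α • (y₀ + sβ • y)‖ ≤ |α| * (1 + |sβ| * (b + ε')) := by
          rw [norm_smul, Real.norm_eq_abs]
          exact mul_le_mul_of_nonneg_left (hYb sβ hss₀) (abs_nonneg _)
        have h2 : |α| * |sβ| = t * |β| := by
          rw [hsabs]
          field_simp
        have hmain : ‖α • y₀ + (t * β) • y‖ ≤ |α| + (t * |β|) * (b + ε') := by
          rw [hval2]
          calc ‖α • (y₀ + sβ • y)‖ ≤ |α| * (1 + |sβ| * (b + ε')) := h1
          _ = |α| + (|α| * |sβ|) * (b + ε') := by ring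
          _ = |α| + (t * |β|) * (b + ε') := by rw [h2]
        obtain ⟨r, hrle, hrineq⟩ := abs_add_abs_exists α β r₀ hr₀.le
        have hX2 : |α| + r₀ * |β| ≤ (1 + r₀ * (a + ε')) * n := by
          calc |α| + r₀ * |β| ≤ |α + r * β| := hrineq
          _ ≤ (1 + |r| * (a + ε')) * n := hXB r hrle
          _ ≤ (1 + r₀ * (a + ε')) * n := by
              apply mul_le_mul_of_nonneg_right _ hn0
              have : |r| * (a + ε') ≤ r₀ * (a + ε') :=
                mul_le_mul_of_nonneg_right hrle (by linarith)
              linarith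
        have hee : (a + ε') * (b + ε') ≤ a * b + 3 * ε' := by nlinarith
        rcases le_or_gt |β| ((a + ε') * n) with h | h
        · have h1' : (t * (b + ε')) * |β| ≤ (t * (b + ε')) * ((a + ε') * n) :=
            mul_le_mul_of_nonneg_left h (mul_nonneg ht.le (by linarith))
          have h2' : t * ((a + ε') * (b + ε') * n) ≤ t * ((a * b + 3 * ε') * n) := by
            apply mul_le_mul_of_nonneg_left _ ht.le
            exact mul_le_mul_of_nonneg_right hee hn0
          nlinarith
        · have h1' : |β| * (t * (b + ε') - r₀) ≤ ((a + ε') * n) * (t * (b + ε') - r₀) :=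
            mul_le_mul_of_nonpos_right h.le (by linarith)
          have h2' : t * ((a + ε') * (b + ε') * n) ≤ t * ((a * b + 3 * ε') * n) := by
            apply mul_le_mul_of_nonneg_left _ ht.le
            exact mul_le_mul_of_nonneg_right hee hn0
          nlinarith
  have hq := pd_le_quot (x₀.smulRight y₀) (xs.smulRight y) hG ht
  have : (‖x₀.smulRight y₀ + t • xs.smulRight y‖ - 1) / t ≤ a * b + 3 * ε' := by
    rw [div_le_iff₀ ht]
    linarith
  linarith

lemma claimA' (x₀ xs : X →L[ℝ] ℝ) (hx₀ : ‖x₀‖ = 1) (hxs : ‖xs‖ = 1)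
    (y₀ y : Y) (hy₀ : ‖y₀‖ = 1) (hy : ‖y‖ = 1) :
    vRad (x₀.smulRight y₀) (xs.smulRight y) ≤ vRad x₀ xs * vRad y₀ y := by
  have hG : ‖x₀.smulRight y₀‖ = 1 := by
    rw [ContinuousLinearMap.norm_smulRight_apply, hx₀, hy₀, one_mul]
  rw [vRad_eq _ _ hG]
  apply max_le
  · exact claimA x₀ xs hx₀ hxs y₀ y hy₀ hy
  · have hneg : -(xs.smulRight y) = (-xs).smulRight y := by
      ext x
      simp
    rw [hneg]
    have h := claimA x₀ (-xs) hx₀ (by rw [norm_neg, hxs]) y₀ y hy₀ hy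
    rwa [vRad_neg x₀ xs hx₀] at h

set_option maxHeartbeats 1000000 in
lemma aux_lower [CompleteSpace X] (x₀ : X →L[ℝ] ℝ) (hx₀ : ‖x₀‖ = 1) (y₀ : Y) (hy₀ : ‖y₀‖ = 1)
    (T : X →L[ℝ] Y) (hT : ‖T‖ ≤ 1) (ψ : StrongDual ℝ Y) (hψ : ‖ψ‖ = 1) (hψ0 : ψ y₀ = 1)
    {c ε₁ : ℝ} (hε₁ : 0 < ε₁) (hε₁1 : ε₁ ≤ 1) (hc0 : 0 ≤ c)
    (hpd : c ≤ pd x₀ (ψ.comp T)) :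
    c - 3 * ε₁ ≤ pd (x₀.smulRight y₀) T := by
  refine le_csInf (quotSet_nonempty _ T) ?_
  rintro r ⟨s, hs, rfl⟩
  rw [le_div_iff₀ hs]
  set t := s * ε₁ with htdef
  have ht : 0 < t := mul_pos hs hε₁
  set xs := ψ.comp T with hxsdef
  have hxs1 : ‖xs‖ ≤ 1 := by
    calc ‖xs‖ ≤ ‖ψ‖ * ‖T‖ := ContinuousLinearMap.opNorm_comp_le _ _
    _ ≤ 1 := by rw [hψ, one_mul]; exact hT
  have hnorm : 1 + t * c ≤ ‖x₀ + t • xs‖ := by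
    have h1 := pd_le_quot x₀ xs hx₀ ht
    have h2 : c ≤ (‖x₀ + t • xs‖ - 1) / t := le_trans hpd h1
    rw [le_div_iff₀ ht] at h2
    linarith
  have hlt : 1 + t * (c - ε₁) < ‖x₀ + t • xs‖ := by nlinarith
  obtain ⟨x, hx1, hx2⟩ := ContinuousLinearMap.exists_lt_apply_of_lt_opNorm _ hlt
  obtain ⟨x', hx'1, hx'2⟩ : ∃ x' : X, ‖x'‖ ≤ 1 ∧ 1 + t * (c - ε₁) < (x₀ + t • xs) x' := by
    rcases le_or_gt 0 ((x₀ + t • xs) x) with h | h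
    · refine ⟨x, hx1.le, ?_⟩
      rwa [Real.norm_eq_abs, abs_of_nonneg h] at hx2
    · refine ⟨-x, by rw [norm_neg]; exact hx1.le, ?_⟩
      rw [map_neg]
      rw [Real.norm_eq_abs, abs_of_neg h] at hx2
      linarith
  set α := x₀ x' with hαdef
  set β := xs x' with hβdef
  have hα1 : α ≤ 1 := by
    have h := x₀.le_opNorm x'
    rw [hx₀, one_mul, Real.norm_eq_abs] at h
    have := le_abs_self α
    linarith [h, hx'1]
  have hβ1 : |β| ≤ 1 := by
    have h := xs.le_opNorm x'
    rw [Real.norm_eq_abs] at h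
    have h2 : ‖xs‖ * ‖x'‖ ≤ 1 := by
      rcases le_or_gt ‖xs‖ 0 with h3 | h3
      · nlinarith [norm_nonneg x', norm_nonneg xs]
      · nlinarith [hx'1, hxs1]
    linarith
  have hsum : 1 + t * (c - ε₁) < α + t * β := by
    have : (x₀ + t • xs) x' = α + t * β := by
      rw [ContinuousLinearMap.add_apply, ContinuousLinearMap.smul_apply, smul_eq_mul]
    rwa [this] at hx'2
  have hβlb : c - ε₁ ≤ β := by nlinarith
  have hαlb : 1 - 2 * t ≤ α := by nlinarith [abs_le.1 hβ1]
  have hval : ψ ((x₀.smulRight y₀ + s • T) x') = α + s * β := by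
    rw [ContinuousLinearMap.add_apply, ContinuousLinearMap.smul_apply,
      ContinuousLinearMap.smulRight_apply, map_add, map_smul, map_smul, hψ0]
    have : ψ (T x') = β := rfl
    rw [this]
    simp [smul_eq_mul]
    exact hαdef.symm
  have hub : α + s * β ≤ ‖x₀.smulRight y₀ + s • T‖ := by
    have h1 : α + s * β ≤ |ψ ((x₀.smulRight y₀ + s • T) x')| := by
      rw [hval]; exact le_abs_self _
    have h2 : |ψ ((x₀.smulRight y₀ + s • T) x')| ≤
        ‖ψ‖ * ‖(x₀.smulRight y₀ + s • T) x'‖ := by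
      have := ψ.le_opNorm ((x₀.smulRight y₀ + s • T) x')
      rwa [Real.norm_eq_abs] at this
    have h3 : ‖(x₀.smulRight y₀ + s • T) x'‖ ≤ ‖x₀.smulRight y₀ + s • T‖ * ‖x'‖ :=
      (x₀.smulRight y₀ + s • T).le_opNorm x'
    have h4 : ‖x₀.smulRight y₀ + s • T‖ * ‖x'‖ ≤ ‖x₀.smulRight y₀ + s • T‖ := by
      nlinarith [norm_nonneg (x₀.smulRight y₀ + s • T), hx'1, norm_nonneg x']
    rw [hψ, one_mul] at h2
    linarith
  have hfin : s * (c - ε₁) ≤ s * β := mul_le_mul_of_nonneg_left hβlb hs.le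
  nlinarith

set_option maxHeartbeats 1000000 in
theorem stmt15' {X Y : Type*} [NormedAddCommGroup X] [NormedSpace ℝ X] [CompleteSpace X]
    [NormedAddCommGroup Y] [NormedSpace ℝ Y] [CompleteSpace Y]
    (x₀ : X →L[ℝ] ℝ) (hx₀ : ‖x₀‖ = 1) (y₀ : Y) (hy₀ : ‖y₀‖ = 1) :
    nInd (x₀.smulRight y₀) = nInd x₀ * nInd y₀ := by
  have hG : ‖x₀.smulRight y₀‖ = 1 := by
    rw [ContinuousLinearMap.norm_smulRight_apply, hx₀, hy₀, one_mul]
  set k₁ := nInd x₀ with hk₁def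
  set k₂ := nInd y₀ with hk₂def
  have hk₁0 : 0 ≤ k₁ := nInd_nonneg x₀ hx₀
  have hk₂0 : 0 ≤ k₂ := nInd_nonneg y₀ hy₀
  have hk₁1 : k₁ ≤ 1 := nInd_le_one x₀ hx₀
  have hk₂1 : k₂ ≤ 1 := nInd_le_one y₀ hy₀
  apply le_antisymm
  · refine le_of_forall_pos_le_add ?_
    intro ε hε
    set ε₁ := min (ε/3) 1 with hε₁def
    have hε₁0 : 0 < ε₁ := lt_min (by linarith) one_pos
    have hε₁1 : ε₁ ≤ 1 := min_le_right _ _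
    have h3ε : 3 * ε₁ ≤ ε := by
      have h := min_le_left (ε/3) 1
      rw [← hε₁def] at h
      linarith
    obtain ⟨xs, hxs, hxsv⟩ := exists_unit_vRad_lt x₀ hx₀ hε₁0
    obtain ⟨y, hy, hyv⟩ := exists_unit_vRad_lt y₀ hy₀ hε₁0
    have hT : ‖xs.smulRight y‖ = 1 := by
      rw [ContinuousLinearMap.norm_smulRight_apply, hxs, hy, one_mul]
    have h1 : nInd (x₀.smulRight y₀) ≤ vRad (x₀.smulRight y₀) (xs.smulRight y) :=
      nInd_le_vRad _ hG hT
    have h2 := claimA' x₀ xs hx₀ hxs y₀ y hy₀ hy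
    have hva0 : 0 ≤ vRad x₀ xs := vRad_nonneg x₀ xs hx₀
    have hvb0 : 0 ≤ vRad y₀ y := vRad_nonneg y₀ y hy₀
    have h3 : vRad x₀ xs * vRad y₀ y ≤ (k₁ + ε₁) * (k₂ + ε₁) :=
      mul_le_mul hxsv.le hyv.le hvb0 (by linarith)
    nlinarith
  · apply le_nInd _ hG
    intro T hTnorm
    refine le_of_forall_pos_le_add ?_
    intro ε hε
    set ε₁ := min (ε/4) (1/2) with hε₁def
    have hε₁0 : 0 < ε₁ := lt_min (by linarith) (by norm_num)
    have hε₁h : ε₁ ≤ 1/2 := min_le_right _ _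
    have h4ε : 4 * ε₁ ≤ ε := by
      have h := min_le_left (ε/4) (1/2)
      rw [← hε₁def] at h
      linarith
    have h1 : (1 - ε₁ : ℝ) < ‖T‖ := by rw [hTnorm]; linarith
    obtain ⟨x₁, hx₁, hTx₁⟩ := ContinuousLinearMap.exists_lt_apply_of_lt_opNorm T h1
    set w := T x₁ with hwdef
    obtain ⟨ψ, hψ1, hψ2, hψ3⟩ := vRad_attained y₀ w hy₀
    have hvw : k₂ * ‖w‖ ≤ vRad y₀ w := nInd_mul_norm_le_vRad y₀ hy₀ w
    set xs := ψ.comp T with hxsdef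
    have hxsn : k₂ * (1 - ε₁) ≤ ‖xs‖ := by
      have hψw : |ψ w| ≤ ‖xs‖ := by
        have h := xs.le_opNorm x₁
        rw [Real.norm_eq_abs] at h
        have hxw : xs x₁ = ψ w := rfl
        rw [hxw] at h
        nlinarith [norm_nonneg xs, hx₁]
      have hk2w : k₂ * (1 - ε₁) ≤ k₂ * ‖w‖ :=
        mul_le_mul_of_nonneg_left hTx₁.le hk₂0
      rw [hψ3] at hψw
      linarith
    have hc : k₁ * ‖xs‖ ≤ vRad x₀ xs := nInd_mul_norm_le_vRad x₀ hx₀ xs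
    set c := vRad x₀ xs with hcdef
    have hcge : k₁ * k₂ * (1 - ε₁) ≤ c := by
      nlinarith [mul_le_mul_of_nonneg_left hxsn hk₁0]
    have hc0 : 0 ≤ c := vRad_nonneg x₀ xs hx₀
    have hTle : ‖T‖ ≤ 1 := le_of_eq hTnorm
    have hε₁1 : ε₁ ≤ 1 := by linarith
    have hmax : c = max (pd x₀ xs) (pd x₀ (-xs)) := vRad_eq x₀ xs hx₀
    have hkey : c - 3 * ε₁ ≤ vRad (x₀.smulRight y₀) T := by
      rw [vRad_eq _ T hG]
      rcases le_total (pd x₀ (-xs)) (pd x₀ xs) with hσ | hσ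
      · have hcle : c ≤ pd x₀ (ψ.comp T) := by
          rw [← hxsdef, hmax, max_eq_left hσ]
        exact le_trans
          (aux_lower x₀ hx₀ y₀ hy₀ T hTle ψ hψ1 hψ2 hε₁0 hε₁1 hc0 hcle)
          (le_max_left _ _)
      · have hneg : ψ.comp (-T) = -xs := by
          ext x
          simp [hxsdef]
        have hcle : c ≤ pd x₀ (ψ.comp (-T)) := by
          rw [hneg, hmax, max_eq_right hσ]
        have hTneg : ‖(-T : X →L[ℝ] Y)‖ ≤ 1 := by rwa [norm_neg]
        exact le_trans
          (aux_lower x₀ hx₀ y₀ hy₀ (-T) hTneg ψ hψ1 hψ2 hε₁0 hε₁1 hc0 hcle)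
          (le_max_right _ _)
    have hk12 : k₁ * k₂ ≤ 1 := by nlinarith
    nlinarith [mul_le_mul_of_nonneg_right hk12 hε₁0.le]

end main

theorem stmt15 {X Y : Type*} [NormedAddCommGroup X] [NormedSpace ℝ X] [CompleteSpace X]
    [NormedAddCommGroup Y] [NormedSpace ℝ Y] [CompleteSpace Y]
    (x₀ : X →L[ℝ] ℝ) (hx₀ : ‖x₀‖ = 1) (y₀ : Y) (hy₀ : ‖y₀‖ = 1) :
    nInd (x₀.smulRight y₀) = nInd x₀ * nInd y₀ := by
  exact stmt15' x₀ hx₀ y₀ hy₀
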